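/- Let f, g : ℝⁿ → ℝ be continuous functions, homogeneous of degree k > 0 with respect to the same dilation (r₁,…,rₙ) with all rᵢ > 0, and suppose f and g have no common zero except 0 ∈ ℝⁿ. Then the set {(f(x), g(x)) : x ∈ ℝⁿ} is closed in ℝ². -/

import Mathlib

open Filter Topology

lemma hom_zero' {n : ℕ} {f : (Fin n → ℝ) → ℝ} {r : Fin n → ℝ} {k : ℝ}
    (hk : 0 < k)
    (hfhom : ∀ ε : ℝ, 0 < ε → ∀ x : Fin n → ℝ,
      f (fun i => ε ^ (r i) * x i) = ε ^ k * f x) : f 0 = 0 := by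
  have h := hfhom 2 (by norm_num) 0
  simp only [Pi.zero_apply, mul_zero] at h
  have h0 : (fun _ : Fin n => (0:ℝ)) = (0 : Fin n → ℝ) := rfl
  rw [h0] at h
  have h2 : (1:ℝ) < (2:ℝ) ^ k :=
    (Real.one_lt_rpow_iff_of_pos (by norm_num)).2 (Or.inl ⟨by norm_num, hk⟩)
  have h3 : f 0 * ((2:ℝ) ^ k - 1) = 0 := by linear_combination -h
  rcases mul_eq_zero.1 h3 with h4 | h4
  · exact h4
  · linarith

lemma normalize_exists' {n : ℕ} {r : Fin n → ℝ} (hr : ∀ i, 0 < r i)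
    (x : Fin n → ℝ) (hx : x ≠ 0) :
    ∃ ε : ℝ, 0 < ε ∧ ‖(fun i => ε ^ (r i) * x i : Fin n → ℝ)‖ = 1 := by
  have hT : (Finset.univ.filter fun i => x i ≠ 0).Nonempty := by
    rcases Function.ne_iff.1 hx with ⟨i, hi⟩
    exact ⟨i, by simpa using hi⟩
  set T := Finset.univ.filter fun i => x i ≠ 0 with hTdef
  set ε := T.inf' hT (fun i => |x i| ^ (-(r i)⁻¹)) with hεdef
  have hεpos : 0 < ε := by
    rw [hεdef, Finset.lt_inf'_iff]
    intro i hi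
    have hxi : x i ≠ 0 := (Finset.mem_filter.1 hi).2
    exact Real.rpow_pos_of_pos (abs_pos.2 hxi) _
  have hkey : ∀ i, x i ≠ 0 → (|x i| ^ (-(r i)⁻¹)) ^ (r i) = |x i|⁻¹ := by
    intro i hxi
    rw [← Real.rpow_mul (abs_nonneg _)]
    have : -(r i)⁻¹ * r i = -1 := by rw [neg_mul, inv_mul_cancel₀ (hr i).ne']
    rw [this, Real.rpow_neg_one]
  refine ⟨ε, hεpos, le_antisymm ?_ ?_⟩
  · rw [pi_norm_le_iff_of_nonneg zero_le_one]
    intro i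
    by_cases hxi : x i = 0
    · simp [hxi]
    · have hiT : i ∈ T := by simp [hTdef, hxi]
      have h1 : ε ≤ |x i| ^ (-(r i)⁻¹) := Finset.inf'_le _ hiT
      have h2 : ε ^ (r i) ≤ (|x i| ^ (-(r i)⁻¹)) ^ (r i) :=
        Real.rpow_le_rpow hεpos.le h1 (hr i).le
      rw [hkey i hxi] at h2
      have h3 : 0 < |x i| := abs_pos.2 hxi
      calc ‖ε ^ (r i) * x i‖ = ε ^ (r i) * |x i| := by
            rw [Real.norm_eq_abs, abs_mul, abs_of_pos (Real.rpow_pos_of_pos hεpos _)]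
        _ ≤ |x i|⁻¹ * |x i| := by
            exact mul_le_mul_of_nonneg_right h2 (abs_nonneg _)
        _ = 1 := inv_mul_cancel₀ h3.ne'
  · obtain ⟨i₀, hi₀T, hi₀⟩ := Finset.exists_mem_eq_inf' hT (fun i => |x i| ^ (-(r i)⁻¹))
    have hxi₀ : x i₀ ≠ 0 := (Finset.mem_filter.1 hi₀T).2
    have h3 : 0 < |x i₀| := abs_pos.2 hxi₀
    have hval : ‖ε ^ (r i₀) * x i₀‖ = 1 := by
      rw [Real.norm_eq_abs, abs_mul, abs_of_pos (Real.rpow_pos_of_pos hεpos _),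
        hεdef, hi₀, hkey i₀ hxi₀]
      exact inv_mul_cancel₀ h3.ne'
    calc (1:ℝ) = ‖ε ^ (r i₀) * x i₀‖ := hval.symm
      _ ≤ _ := norm_le_pi_norm (fun i => ε ^ (r i) * x i : Fin n → ℝ) i₀

theorem homogeneous_image_closed (n : ℕ) (f g : (Fin n → ℝ) → ℝ)
    (r : Fin n → ℝ) (hr : ∀ i, 0 < r i) (k : ℝ) (hk : 0 < k)
    (hfc : Continuous f) (hgc : Continuous g)
    (hfhom : ∀ ε : ℝ, 0 < ε → ∀ x : Fin n → ℝ,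
      f (fun i => ε ^ (r i) * x i) = ε ^ k * f x)
    (hghom : ∀ ε : ℝ, 0 < ε → ∀ x : Fin n → ℝ,
      g (fun i => ε ^ (r i) * x i) = ε ^ k * g x)
    (hzero : ∀ x : Fin n → ℝ, f x = 0 → g x = 0 → x = 0) :
    IsClosed {p : ℝ × ℝ | ∃ x : Fin n → ℝ, p = (f x, g x)} := by
  have hf0 : f 0 = 0 := hom_zero' hk hfhom
  have hg0 : g 0 = 0 := hom_zero' hk hghom
  rcases Nat.eq_zero_or_pos n with hn | hn
  · subst hn
    have hset : {p : ℝ × ℝ | ∃ x : Fin 0 → ℝ, p = (f x, g x)} = {((0:ℝ), (0:ℝ))} := by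
      ext p
      constructor
      · rintro ⟨x, rfl⟩
        have hx0 : x = 0 := Subsingleton.elim _ _
        rw [Set.mem_singleton_iff, hx0, hf0, hg0]
      · intro hp
        rw [Set.mem_singleton_iff] at hp
        exact ⟨0, by rw [hp, hf0, hg0]⟩
    rw [hset]
    exact isClosed_singleton
  -- n ≥ 1 case
  have hne : Nonempty (Fin n) := ⟨⟨0, hn⟩⟩
  set q : (Fin n → ℝ) → ℝ × ℝ := fun y => (f y, g y) with hq
  have hqc : Continuous q := hfc.prodMk hgc
  have hsph : IsCompact (Metric.sphere (0 : Fin n → ℝ) 1) := isCompact_sphere 0 1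
  have hsphne : (Metric.sphere (0 : Fin n → ℝ) 1).Nonempty := by
    refine ⟨fun _ => 1, ?_⟩
    rw [mem_sphere_zero_iff_norm, pi_norm_const]
    norm_num
  -- lower bound a on ‖q y‖ for y on the sphere
  obtain ⟨y₁, hy₁, hmin⟩ := hsph.exists_isMinOn hsphne (hqc.norm.continuousOn)
  set a : ℝ := ‖q y₁‖ with ha
  have hapos : 0 < a := by
    rw [ha, norm_pos_iff]
    intro h0
    have h1 : f y₁ = 0 ∧ g y₁ = 0 := Prod.ext_iff.1 h0
    have := hzero y₁ h1.1 h1.2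
    rw [mem_sphere_zero_iff_norm, this] at hy₁
    simp at hy₁
  apply IsSeqClosed.isClosed
  intro u p hu hup
  by_cases hp : p = 0
  · exact ⟨0, by simp [hp, hf0, hg0, Prod.ext_iff]⟩
  choose x hx using hu
  have key : ∀ m, ∃ t : ℝ, ∃ y : Fin n → ℝ, 0 ≤ t ∧ y ∈ Metric.sphere (0 : Fin n → ℝ) 1 ∧
      u m = t • q y := by
    intro m
    by_cases hxm : x m = 0
    · refine ⟨0, y₁, le_refl 0, hy₁, ?_⟩
      rw [hx m, hxm, zero_smul]
      simp [hf0, hg0, Prod.ext_iff]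
    · obtain ⟨ε, hε, hεn⟩ := normalize_exists' hr (x m) hxm
      have hεk : (0:ℝ) < ε ^ k := Real.rpow_pos_of_pos hε k
      refine ⟨(ε ^ k)⁻¹, fun i => ε ^ (r i) * x m i, by positivity, ?_, ?_⟩
      · rw [mem_sphere_zero_iff_norm]; exact hεn
      · rw [hx m, hq]
        simp only [Prod.smul_mk, smul_eq_mul, hfhom ε hε (x m), hghom ε hε (x m)]
        rw [inv_mul_cancel_left₀ hεk.ne', inv_mul_cancel_left₀ hεk.ne']
  choose t y ht hy hty using key
  -- bound on t
  obtain ⟨B, hB⟩ := (hup.norm).bddAbove_range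
  have htle : ∀ m, t m ≤ B / a := by
    intro m
    rw [le_div_iff₀ hapos]
    calc t m * a ≤ t m * ‖q (y m)‖ := by
          exact mul_le_mul_of_nonneg_left (hmin (hy m)) (ht m)
      _ = ‖u m‖ := by rw [hty m, norm_smul, Real.norm_eq_abs, abs_of_nonneg (ht m)]
      _ ≤ B := hB ⟨m, rfl⟩
  -- compactness
  have hK : IsCompact ((Set.Icc (0:ℝ) (B/a)) ×ˢ (Metric.sphere (0 : Fin n → ℝ) 1)) :=
    isCompact_Icc.prod hsph
  obtain ⟨⟨t₀, y₀⟩, hmem, φ, hφ, hconv⟩ :=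
    hK.isSeqCompact (x := fun m => (t m, y m)) (fun m => ⟨⟨ht m, htle m⟩, hy m⟩)
  have h1 : Tendsto (fun m => t (φ m)) atTop (𝓝 t₀) :=
    (continuous_fst.tendsto _).comp hconv
  have h2 : Tendsto (fun m => y (φ m)) atTop (𝓝 y₀) :=
    (continuous_snd.tendsto _).comp hconv
  have hlim : Tendsto (fun m => u (φ m)) atTop (𝓝 (t₀ • q y₀)) := by
    have : (fun m => u (φ m)) = fun m => t (φ m) • q (y (φ m)) := by
      funext m; exact hty (φ m)
    rw [this]
    exact h1.smul ((hqc.tendsto y₀).comp h2)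
  have hpe : p = t₀ • q y₀ :=
    tendsto_nhds_unique (hup.comp hφ.tendsto_atTop) hlim
  have ht₀ : 0 < t₀ := by
    have ht₀' : (0:ℝ) ≤ t₀ := hmem.1.1
    rcases lt_or_eq_of_le ht₀' with h | h
    · exact h
    · exfalso; apply hp; rw [hpe, ← h, zero_smul]
  -- produce the preimage point
  set ε := t₀ ^ (k⁻¹ : ℝ) with hεd
  have hεpos : 0 < ε := Real.rpow_pos_of_pos ht₀ _
  have hεk : ε ^ k = t₀ := by
    rw [hεd, ← Real.rpow_mul ht₀.le, inv_mul_cancel₀ hk.ne', Real.rpow_one]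
  refine ⟨fun i => ε ^ (r i) * y₀ i, ?_⟩
  rw [hpe, hfhom ε hεpos y₀, hghom ε hεpos y₀, hεk, hq]
  simp [Prod.ext_iff]
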